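/- Let F be a finite-dimensional real normed vector space, let C ⊆ F be a closed convex cone which is proper (C ∩ (−C) = {0}) and satisfies C ≠ {0}, and let T : F → F be a linear map with T(C) ⊆ C. Then T has an eigenvector in C: there exist x ∈ C with x ≠ 0 and a real number μ ≥ 0 such that T x = μ • x. -/

import Mathlib

open Set Filter Topology
open scoped RealInnerProductSpace

set_option synthInstance.maxHeartbeats 1000000
set_option maxHeartbeats 1000000

lemma dual_strict_pos {n : ℕ} (C : Set (EuclideanSpace ℝ (Fin n))) (hcl : IsClosed C)
    (hadd : ∀ x ∈ C, ∀ y ∈ C, x + y ∈ C)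
    (hsmul : ∀ t : ℝ, 0 ≤ t → ∀ x ∈ C, t • x ∈ C)
    (hproper : C ∩ (-C) = {0}) :
    ∃ g, ∀ x ∈ C, x ≠ 0 → 0 < ⟪x, g⟫ := by
  have h0 : (0 : EuclideanSpace ℝ (Fin n)) ∈ C := by
    have : (0 : EuclideanSpace ℝ (Fin n)) ∈ C ∩ (-C) := by rw [hproper]; rfl
    exact this.1
  set K : ConvexCone ℝ (EuclideanSpace ℝ (Fin n)) :=
    { carrier := C
      smul_mem' := fun {t} ht {x} hx => hsmul t ht.le x hx
      add_mem' := fun {x} hx {y} hy => hadd x hx y hy } with hK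
  have hKset : (K : Set (EuclideanSpace ℝ (Fin n))) = C := rfl
  set D : Set (EuclideanSpace ℝ (Fin n)) := (ProperCone.innerDual C : Set (EuclideanSpace ℝ (Fin n))) with hD
  have hdd : (ProperCone.innerDual D : Set (EuclideanSpace ℝ (Fin n))) = C := by
    let P : ProperCone ℝ (EuclideanSpace ℝ (Fin n)) :=
      { carrier := C
        add_mem' := fun {x y} hx hy => hadd x hx y hy
        zero_mem' := h0
        smul_mem' := fun c x hx => hsmul (c : ℝ) c.2 x hx
        isClosed' := hcl }
    have := ProperCone.innerDual_innerDual P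
    exact congrArg (fun S : ProperCone ℝ (EuclideanSpace ℝ (Fin n)) =>
      (S : Set (EuclideanSpace ℝ (Fin n)))) this
  have hspan : Submodule.span ℝ D = ⊤ := by
    by_contra h
    have hbot : (Submodule.span ℝ D)ᗮ ≠ ⊥ := by
      intro hb
      exact h (Submodule.orthogonal_eq_bot_iff.mp hb)
    obtain ⟨v, hvmem, hv0⟩ := Submodule.exists_mem_ne_zero_of_ne_bot hbot
    have hvd : ∀ y ∈ D, ⟪y, v⟫ = 0 := fun y hy =>
      (Submodule.mem_orthogonal _ v).mp hvmem y (Submodule.subset_span hy)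
    have hv : v ∈ C := by
      rw [← hdd]
      exact fun y hy => le_of_eq (hvd y hy).symm
    have hnv : -v ∈ C := by
      rw [← hdd]
      intro y hy
      rw [innerₗ_apply_apply, inner_neg_right, hvd y hy, neg_zero]
    have : v ∈ C ∩ (-C) := ⟨hv, by simpa using hnv⟩
    rw [hproper] at this
    exact hv0 this

  -- D is convex, contains 0
  have hDconv : Convex ℝ D := (ProperCone.innerDual C).convex
  have hD0 : (0 : EuclideanSpace ℝ (Fin n)) ∈ D := (ProperCone.innerDual C).zero_mem
  have hDmem : ∀ g ∈ D, ∀ x ∈ C, 0 ≤ ⟪x, g⟫ := fun g hg x hx => hg hx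
  clear hdd hK hKset
  -- separate
  have haff : affineSpan ℝ D = ⊤ := by
    rw [AffineSubspace.affineSpan_eq_top_iff_vectorSpan_eq_top_of_nonempty ℝ _ _ ⟨0, hD0⟩]
    rw [← top_le_iff, ← hspan]
    rw [Submodule.span_le]
    intro y hy
    have : y -ᵥ (0:EuclideanSpace ℝ (Fin n)) ∈ vectorSpan ℝ D := vsub_mem_vectorSpan ℝ hy hD0
    simpa using this
  obtain ⟨g, hg⟩ := (hDconv.interior_nonempty_iff_affineSpan_eq_top).mpr haff
  refine ⟨g, fun x hx hx0 => ?_⟩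
  rcases lt_or_eq_of_le (hDmem g (interior_subset hg) x hx) with h | h
  · exact h
  exfalso
  obtain ⟨ε, hε, hball⟩ := Metric.isOpen_iff.mp isOpen_interior g hg
  have hxn : 0 < ‖x‖ := norm_pos_iff.mpr hx0
  set t : ℝ := ε / (2 * ‖x‖) with ht
  have htpos : 0 < t := by positivity
  have hmem : g - t • x ∈ D := by
    apply interior_subset
    apply hball
    rw [Metric.mem_ball, dist_eq_norm]
    have : ‖g - t • x - g‖ = t * ‖x‖ := by
      rw [sub_sub_cancel_left, norm_neg, norm_smul, Real.norm_eq_abs, abs_of_pos htpos]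
    rw [this, ht]
    rw [div_mul_eq_mul_div, mul_comm]
    rw [mul_comm 2 ‖x‖, ← div_div]
    nlinarith [div_lt_self hε one_lt_two, mul_div_cancel_left₀ ε (ne_of_gt (by positivity : (0:ℝ) < ‖x‖))]
  have := hDmem _ hmem x hx
  rw [inner_sub_right, ← h, inner_smul_right, zero_sub, real_inner_self_eq_norm_sq] at this
  nlinarith [mul_pos htpos (pow_pos hxn 2)]

lemma exists_order_unit {F : Type*} [NormedAddCommGroup F] [NormedSpace ℝ F]
    [FiniteDimensional ℝ F] (C : Set F)
    (hadd : ∀ x ∈ C, ∀ y ∈ C, x + y ∈ C)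
    (hsmul : ∀ t : ℝ, 0 ≤ t → ∀ x ∈ C, t • x ∈ C)
    (h0 : (0 : F) ∈ C) :
    ∃ e' ∈ C, ∃ δ₀ : ℝ, 0 < δ₀ ∧
      ∀ z ∈ Submodule.span ℝ C, ‖z‖ ≤ δ₀ → e' + z ∈ C := by
  obtain ⟨b, hbC, hbspan, hbli⟩ := exists_linearIndependent ℝ C
  haveI : Fintype b := hbli.setFinite.fintype
  set W := Submodule.span ℝ C with hW
  have hrange : Submodule.span ℝ (Set.range ((↑) : b → F)) = W := by
    rw [Subtype.range_coe, hbspan]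
  set B : Module.Basis b ℝ W := (Module.Basis.span hbli).map (LinearEquiv.ofEq _ _ hrange) with hB
  have hBi : ∀ i : b, ((B i : W) : F) = (i : F) := by
    intro i
    rw [hB, Module.Basis.map_apply, LinearEquiv.coe_ofEq_apply, Module.Basis.span_apply]
  set cL : b → (W →L[ℝ] ℝ) := fun i => LinearMap.toContinuousLinearMap (B.coord i) with hcL
  set M : ℝ := 1 + ∑ i : b, ‖cL i‖ with hM
  have hMpos : 0 < M := by
    have : (0:ℝ) ≤ ∑ i : b, ‖cL i‖ := Finset.sum_nonneg fun i _ => ContinuousLinearMap.opNorm_nonneg _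
    linarith
  have hcoord : ∀ (z : W) (i : b), |B.repr z i| ≤ M * ‖z‖ := by
    intro z i
    have h1 : |B.repr z i| = |cL i z| := by
      rw [hcL]; simp [Module.Basis.coord_apply]
    have h2 : |cL i z| ≤ ‖cL i‖ * ‖z‖ := (cL i).le_opNorm z
    have h3 : ‖cL i‖ ≤ ∑ j : b, ‖cL j‖ :=
      Finset.single_le_sum (fun j _ => ContinuousLinearMap.opNorm_nonneg (cL j)) (Finset.mem_univ i)
    have h4 : ‖cL i‖ * ‖z‖ ≤ M * ‖z‖ := by
      apply mul_le_mul_of_nonneg_right _ (norm_nonneg z)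
      rw [hM]; linarith
    rw [h1]; linarith
  refine ⟨∑ i : b, (i : F), ?_, 1 / M, by positivity, ?_⟩
  · exact Finset.sum_induction _ (· ∈ C) (fun a b ha hb => hadd a ha b hb) h0
      (fun i _ => hbC i.2)
  · intro z hzW hznorm
    set zW : W := ⟨z, hzW⟩ with hzWdef
    have hz_eq : z = ∑ i : b, B.repr zW i • (i : F) := by
      have := B.sum_repr zW
      have hcoe := congrArg (Submodule.subtype W) this
      simp only [map_sum, map_smul, Submodule.coe_subtype] at hcoe
      rw [show z = (zW : F) from rfl, ← hcoe]
      refine (Finset.sum_congr rfl fun i _ => ?_).symm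
      rw [hBi]
    have hznorm' : ‖zW‖ ≤ 1 / M := by
      rw [hzWdef]
      simpa [Submodule.coe_norm] using hznorm
    have key : (∑ i : b, (i : F)) + z = ∑ i : b, (1 + B.repr zW i) • (i : F) := by
      rw [hz_eq]
      rw [← Finset.sum_add_distrib]
      refine Finset.sum_congr rfl fun i _ => ?_
      rw [add_smul, one_smul]
    rw [key]
    refine Finset.sum_induction _ (· ∈ C) (fun a b ha hb => hadd a ha b hb) h0
      (fun i _ => ?_)
    apply hsmul _ _ _ (hbC i.2)
    have := hcoord zW i
    have hMz : M * ‖zW‖ ≤ 1 := by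
      calc M * ‖zW‖ ≤ M * (1/M) := by
            apply mul_le_mul_of_nonneg_left hznorm' hMpos.le
        _ = 1 := by field_simp
    have := abs_le.mp (le_trans this hMz)
    linarith [this.1]

lemma exists_strict_pos_functional {F : Type*} [NormedAddCommGroup F] [NormedSpace ℝ F]
    [FiniteDimensional ℝ F] (C : Set F) (hcl : IsClosed C)
    (hadd : ∀ x ∈ C, ∀ y ∈ C, x + y ∈ C)
    (hsmul : ∀ t : ℝ, 0 ≤ t → ∀ x ∈ C, t • x ∈ C)
    (hproper : C ∩ (-C) = {0}) :
    ∃ f : F →L[ℝ] ℝ, ∀ x ∈ C, x ≠ 0 → 0 < f x := by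
  set e := toEuclidean (E := F) with he
  set C' : Set (EuclideanSpace ℝ (Fin (Module.finrank ℝ F))) := ⇑e '' C with hC'
  have hcl' : IsClosed C' := e.toHomeomorph.isClosedMap C hcl
  have hadd' : ∀ x ∈ C', ∀ y ∈ C', x + y ∈ C' := by
    rintro _ ⟨x, hx, rfl⟩ _ ⟨y, hy, rfl⟩
    exact ⟨x + y, hadd x hx y hy, map_add e x y⟩
  have hsmul' : ∀ t : ℝ, 0 ≤ t → ∀ x ∈ C', t • x ∈ C' := by
    rintro t ht _ ⟨x, hx, rfl⟩
    exact ⟨t • x, hsmul t ht x hx, map_smul e t x⟩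
  have hneg : ⇑e '' (-C) = -C' := by
    ext z
    constructor
    · rintro ⟨x, hx, rfl⟩
      rw [Set.mem_neg, ← map_neg]
      exact ⟨-x, hx, rfl⟩
    · intro hz
      rw [Set.mem_neg] at hz
      obtain ⟨x, hx, hxe⟩ := hz
      refine ⟨-x, by simpa using hx, ?_⟩
      rw [map_neg, hxe, neg_neg]
  have hproper' : C' ∩ (-C') = {0} := by
    rw [← hneg, ← Set.image_inter e.injective, hproper, Set.image_singleton, map_zero]
  obtain ⟨g, hg⟩ := dual_strict_pos C' hcl' hadd' hsmul' hproper'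
  refine ⟨(innerSL ℝ g).comp (e : F →L[ℝ] EuclideanSpace ℝ (Fin (Module.finrank ℝ F))),
    fun x hx hx0 => ?_⟩
  have : 0 < ⟪e x, g⟫ := hg (e x) ⟨x, hx, rfl⟩ (by simpa using hx0)
  rw [real_inner_comm] at this; simpa using this

theorem eigenvector_in_cone_finite_dim
    {F : Type*} [NormedAddCommGroup F] [NormedSpace ℝ F] [FiniteDimensional ℝ F]
    (C : Set F) (hC_closed : IsClosed C)
    (hC_add : ∀ x ∈ C, ∀ y ∈ C, x + y ∈ C)
    (hC_smul : ∀ t : ℝ, 0 ≤ t → ∀ x ∈ C, t • x ∈ C)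
    (hC_proper : C ∩ (-C) = {0})
    (hC_ne : C ≠ {0})
    (T : F →ₗ[ℝ] F) (hT : ∀ x ∈ C, T x ∈ C) :
    ∃ x ∈ C, x ≠ 0 ∧ ∃ μ : ℝ, 0 ≤ μ ∧ T x = μ • x := by
  classical
  have h0C : (0 : F) ∈ C := by
    have : (0 : F) ∈ C ∩ (-C) := by rw [hC_proper]; rfl
    exact this.1
  obtain ⟨f, hf⟩ := exists_strict_pos_functional C hC_closed hC_add hC_smul hC_proper
  have hfnn : ∀ x ∈ C, 0 ≤ f x := by
    intro x hx
    rcases eq_or_ne x 0 with rfl | h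
    · simp
    · exact (hf x hx h).le
  obtain ⟨e', he'C, δ₀, hδ₀, hunit⟩ := exists_order_unit C hC_add hC_smul h0C
  -- a nonzero element of C
  obtain ⟨y₀, hy₀C, hy₀0⟩ : ∃ y₀ ∈ C, y₀ ≠ 0 := by
    by_contra h
    push_neg at h
    apply hC_ne
    exact Set.eq_singleton_iff_unique_mem.mpr ⟨h0C, fun x hx => by
      by_contra hx0; exact hx0 (by tauto)⟩
  -- e' is nonzero
  have he'0 : e' ≠ 0 := by
    intro he0
    have hy₀W : y₀ ∈ Submodule.span ℝ C := Submodule.subset_span hy₀C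
    have hny : (0:ℝ) < ‖y₀‖ := norm_pos_iff.mpr hy₀0
    set z := (δ₀ / ‖y₀‖) • y₀ with hz
    have hzW : z ∈ Submodule.span ℝ C := Submodule.smul_mem _ _ hy₀W
    have hzn : ‖z‖ = δ₀ := by
      rw [hz, norm_smul, Real.norm_eq_abs, abs_of_pos (by positivity), div_mul_cancel₀]
      exact hny.ne'
    have h1 : z ∈ C := by
      have := hunit z hzW hzn.le
      rwa [he0, zero_add] at this
    have h2 : -z ∈ C := by
      have := hunit (-z) (Submodule.neg_mem _ hzW) (by rw [norm_neg]; exact hzn.le)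
      rwa [he0, zero_add] at this
    have : z ∈ C ∩ (-C) := ⟨h1, by simpa using h2⟩
    rw [hC_proper] at this
    have : z ≠ 0 := by
      rw [hz]
      exact smul_ne_zero (by positivity) hy₀0
    exact this (by assumption)
  have hfe' : 0 < f e' := hf e' he'C he'0
  -- lower bound for f on C
  have hS : IsCompact (C ∩ Metric.sphere 0 1) :=
    (isCompact_sphere (0:F) 1).inter_left hC_closed
  have hSne : (C ∩ Metric.sphere 0 1).Nonempty := by
    refine ⟨‖y₀‖⁻¹ • y₀, hC_smul _ (by positivity) _ hy₀C, ?_⟩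
    have hny : (0:ℝ) < ‖y₀‖ := norm_pos_iff.mpr hy₀0
    simp [norm_smul, abs_of_pos (inv_pos.mpr hny), inv_mul_cancel₀ hny.ne']
  obtain ⟨a, haS, hmin'⟩ := hS.exists_isMinOn hSne f.continuous.continuousOn
  have hmin : ∀ x ∈ C ∩ Metric.sphere 0 1, f a ≤ f x := fun x hx => isMinOn_iff.mp hmin' x hx
  have ha0 : a ≠ 0 := by
    intro h
    have := haS.2
    rw [h] at this
    simp at this
  have hca : 0 < f a := hf a haS.1 ha0
  have hlow : ∀ x ∈ C, f a * ‖x‖ ≤ f x := by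
    intro x hx
    rcases eq_or_ne x 0 with rfl | hx0
    · simp
    · have hnx : (0:ℝ) < ‖x‖ := norm_pos_iff.mpr hx0
      have hu : ‖x‖⁻¹ • x ∈ C ∩ Metric.sphere 0 1 := by
        refine ⟨hC_smul _ (by positivity) _ hx, ?_⟩
        simp [norm_smul, abs_of_pos (inv_pos.mpr hnx), inv_mul_cancel₀ hnx.ne']
      have := hmin _ hu
      rw [map_smul, smul_eq_mul] at this
      calc f a * ‖x‖ ≤ ‖x‖⁻¹ * f x * ‖x‖ := by nlinarith
        _ = f x := by field_simp
  -- the compact base K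
  set K : Set F := C ∩ {x | f x = 1} with hK
  have hKcl : IsClosed K := hC_closed.inter (isClosed_eq f.continuous continuous_const)
  set R : ℝ := 1 / f a with hR
  have hRpos : 0 < R := by positivity
  have hKR : ∀ x ∈ K, ‖x‖ ≤ R := by
    rintro x ⟨hxC, hx1⟩
    have := hlow x hxC
    rw [hx1] at this
    rw [hR, le_div_iff₀ hca]
    linarith
  have hKb : Bornology.IsBounded K := by
    apply (Metric.isBounded_closedBall (x := (0:F)) (r := R)).subset
    intro x hx
    simpa [Metric.mem_closedBall] using hKR x hx
  have hKcomp : IsCompact K := Metric.isCompact_of_isClosed_isBounded hKcl hKb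
  have hKne : K.Nonempty := by
    have hfy₀ : 0 < f y₀ := hf y₀ hy₀C hy₀0
    refine ⟨(f y₀)⁻¹ • y₀, hC_smul _ (inv_pos.mpr hfy₀).le _ hy₀C, ?_⟩
    simp only [Set.mem_setOf_eq, map_smul, smul_eq_mul]
    field_simp
  have hCW : C ⊆ (Submodule.span ℝ C : Set F) := Submodule.subset_span
  have hTcont : Continuous T := T.continuous_of_finiteDimensional
  -- the key per-epsilon eigenvector
  have key : ∀ ε : ℝ, 0 < ε → ∃ x ∈ K, ∃ μ : ℝ, 0 ≤ μ ∧ T x + ε • e' = μ • x := by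
    intro ε hε
    set Tε : F →ₗ[ℝ] F := T + ε • (LinearMap.smulRight (f : F →ₗ[ℝ] ℝ) e') with hTε
    have hTε_apply : ∀ x, Tε x = T x + (ε * f x) • e' := by
      intro x
      simp [hTε, smul_smul]
    have hTεC : ∀ x ∈ C, Tε x ∈ C := by
      intro x hx
      rw [hTε_apply]
      exact hC_add _ (hT x hx) _ (hC_smul _ (mul_nonneg hε.le (hfnn x hx)) _ he'C)
    have hTεcont : Continuous Tε := Tε.continuous_of_finiteDimensional
    obtain ⟨aM, haMK, haMmax'⟩ := hKcomp.exists_isMaxOn hKne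
      ((f.continuous.comp hTεcont).continuousOn)
    have haMmax : ∀ x ∈ K, f (Tε x) ≤ f (Tε aM) := fun x hx => isMaxOn_iff.mp haMmax' x hx
    set M₀ : ℝ := f (Tε aM) with hM₀
    set Λ : Set ℝ := {lam : ℝ | (∃ x ∈ K, Tε x - lam • x ∈ C) ∧ 0 ≤ lam} with hΛ
    have hΛub : ∀ lam ∈ Λ, lam ≤ M₀ := by
      rintro lam ⟨⟨x, hxK, hmem⟩, hlam0⟩
      have := hfnn _ hmem
      rw [map_sub, map_smul, smul_eq_mul, hxK.2, mul_one] at this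
      have h2 := haMmax x hxK
      linarith
    have hΛ0 : (0:ℝ) ∈ Λ := by
      obtain ⟨x, hxK⟩ := hKne
      exact ⟨⟨x, hxK, by rw [zero_smul, sub_zero]; exact hTεC x hxK.1⟩, le_refl 0⟩
    -- compactness of Λ
    set A : Set (ℝ × F) := ((Set.Icc 0 M₀) ×ˢ K) ∩ {p : ℝ × F | Tε p.2 - p.1 • p.2 ∈ C} with hA
    have hAcomp : IsCompact A := by
      apply (isCompact_Icc.prod hKcomp).inter_right
      exact hC_closed.preimage ((hTεcont.comp continuous_snd).sub
        (continuous_fst.smul continuous_snd))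
    have hΛeq : Λ = Prod.fst '' A := by
      ext lam
      constructor
      · intro hlamΛ
        obtain ⟨⟨x, hxK, hmem⟩, hlam0⟩ := id hlamΛ
        exact ⟨(lam, x), ⟨⟨⟨hlam0, hΛub lam hlamΛ⟩, hxK⟩, hmem⟩, rfl⟩
      · rintro ⟨⟨l, x⟩, ⟨⟨hlI, hxK⟩, hmem⟩, rfl⟩
        exact ⟨⟨x, hxK, hmem⟩, hlI.1⟩
    have hΛcomp : IsCompact Λ := by
      rw [hΛeq]
      exact hAcomp.image continuous_fst
    set μ : ℝ := sSup Λ with hμ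
    have hμΛ : μ ∈ Λ := hΛcomp.sSup_mem ⟨0, hΛ0⟩
    obtain ⟨⟨x₀, hx₀K, hx₀mem⟩, hμ0⟩ := hμΛ
    set y : F := Tε x₀ - μ • x₀ with hy
    by_cases hy0 : y = 0
    · refine ⟨x₀, hx₀K, μ, hμ0, ?_⟩
      have : Tε x₀ = μ • x₀ := by
        rw [← sub_eq_zero]; exact hy0
      rw [hTε_apply, hx₀K.2, mul_one] at this
      exact this
    · exfalso
      have hyC : y ∈ C := hx₀mem
      have hfy : 0 < f y := hf y hyC hy0
      set c₀ : ℝ := f (Tε x₀) with hc₀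
      have hc₀pos : 0 < c₀ := by
        rw [hc₀, hTε_apply, hx₀K.2, mul_one, map_add, map_smul, smul_eq_mul]
        have := hfnn _ (hT x₀ hx₀K.1)
        nlinarith
      set z : F := c₀⁻¹ • Tε x₀ with hzdef
      have hzC : z ∈ C := hC_smul _ (by positivity) _ (hTεC x₀ hx₀K.1)
      have hzK : z ∈ K := by
        refine ⟨hzC, ?_⟩
        simp only [Set.mem_setOf_eq, hzdef, map_smul, smul_eq_mul]
        rw [← hc₀]
        field_simp
      have hzR : ‖z‖ ≤ R := hKR z hzK
      set β : ℝ := c₀⁻¹ * (ε * f y) with hβdef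
      have hβ : 0 < β := by positivity
      set δ : ℝ := β * δ₀ / R with hδdef
      have hδ : 0 < δ := by positivity
      have hclaim : Tε z - (μ + δ) • z ∈ C := by
        have e1 : Tε z - μ • z = c₀⁻¹ • Tε y := by
          rw [hzdef, map_smul, hy, map_sub, map_smul, smul_sub]
          module
        have hstep1 : Tε z - (μ + δ) • z = c₀⁻¹ • T y + (β • e' - δ • z) := by
          calc Tε z - (μ + δ) • z = (Tε z - μ • z) - δ • z := by module
            _ = c₀⁻¹ • Tε y - δ • z := by rw [e1]
            _ = c₀⁻¹ • (T y + (ε * f y) • e') - δ • z := by rw [hTε_apply y]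
            _ = c₀⁻¹ • T y + (β • e' - δ • z) := by rw [hβdef]; module
        rw [hstep1]
        apply hC_add _ (hC_smul _ (by positivity) _ (hT y hyC))
        have hb : β * (δ / β) = δ := by field_simp
        have hgen : ∀ w : F, β • e' - δ • w = β • (e' + (-(δ / β)) • w) := by
          intro w
          rw [smul_add, smul_smul, mul_neg, hb, neg_smul, ← sub_eq_add_neg]
        have : β • e' - δ • z = β • (e' + (-(δ / β)) • z) := hgen z
        rw [this]
        apply hC_smul _ hβ.le
        apply hunit
        · exact Submodule.smul_mem _ _ (hCW hzC)
        · rw [norm_smul, Real.norm_eq_abs, abs_neg, abs_of_pos (by positivity)]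
          calc δ / β * ‖z‖ ≤ δ / β * R := by
                apply mul_le_mul_of_nonneg_left hzR (by positivity)
            _ = δ₀ := by rw [hδdef]; field_simp
      have : μ + δ ∈ Λ := ⟨⟨z, hzK, hclaim⟩, by linarith⟩
      have hle : μ + δ ≤ μ := le_csSup ⟨M₀, hΛub⟩ this
      linarith
  -- pass to the limit
  have keyn : ∀ n : ℕ, ∃ x ∈ K, ∃ μ : ℝ, 0 ≤ μ ∧
      T x + (1 / (n + 1) : ℝ) • e' = μ • x := by
    intro n
    exact key (1 / (n + 1)) (by positivity)
  choose xs hxsK μs hμs0 hμseq using keyn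
  obtain ⟨am, hamK, hammax'⟩ := hKcomp.exists_isMaxOn hKne
    ((f.continuous.comp hTcont).continuousOn)
  have hammax : ∀ x ∈ K, f (T x) ≤ f (T am) := fun x hx => isMaxOn_iff.mp hammax' x hx
  set Mb : ℝ := f (T am) + f e' with hMb
  have hμsb : ∀ n, μs n ∈ Set.Icc (0:ℝ) Mb := by
    intro n
    refine ⟨hμs0 n, ?_⟩
    have heq := congrArg f (hμseq n)
    rw [map_add, map_smul, map_smul, smul_eq_mul, smul_eq_mul, (hxsK n).2, mul_one] at heq
    have h1 : f (T (xs n)) ≤ f (T am) := hammax (xs n) (hxsK n)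
    have h2 : (1 / ((n:ℝ) + 1)) * f e' ≤ f e' := by
      have hn1 : (1:ℝ) ≤ (n:ℝ) + 1 := by
        have : (0:ℝ) ≤ (n:ℝ) := Nat.cast_nonneg n
        linarith
      have : (1 / ((n:ℝ) + 1)) ≤ 1 := by
        rw [div_le_one (by linarith)]; linarith
      nlinarith [hfe'.le]
    rw [hMb]
    linarith
  obtain ⟨⟨xl, μl⟩, hmemP, φ, hφmono, hconv⟩ :=
    (hKcomp.prod isCompact_Icc).tendsto_subseq
      (x := fun n => (xs n, μs n)) (fun n => ⟨hxsK n, hμsb n⟩)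
  have hxlK : xl ∈ K := hmemP.1
  have hμl : μl ∈ Set.Icc (0:ℝ) Mb := hmemP.2
  have hxconv : Tendsto (fun n => xs (φ n)) atTop (𝓝 xl) :=
    (continuous_fst.tendsto _).comp hconv
  have hμconv : Tendsto (fun n => μs (φ n)) atTop (𝓝 μl) :=
    (continuous_snd.tendsto _).comp hconv
  have hεconv : Tendsto (fun n : ℕ => (1 / ((φ n : ℝ) + 1))) atTop (𝓝 0) := by
    apply (tendsto_one_div_add_atTop_nhds_zero_nat).comp hφmono.tendsto_atTop
  have hlhs : Tendsto (fun n => T (xs (φ n)) + (1 / ((φ n : ℝ) + 1)) • e')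
      atTop (𝓝 (T xl)) := by
    have h1 : Tendsto (fun n => T (xs (φ n))) atTop (𝓝 (T xl)) :=
      (hTcont.tendsto xl).comp hxconv
    have h2 : Tendsto (fun n => (1 / ((φ n : ℝ) + 1)) • e') atTop (𝓝 (0:F)) := by
      have := hεconv.smul (tendsto_const_nhds (x := e'))
      simpa using this
    simpa using h1.add h2
  have hrhs : Tendsto (fun n => μs (φ n) • xs (φ n)) atTop (𝓝 (μl • xl)) :=
    hμconv.smul hxconv
  have heq : (fun n => T (xs (φ n)) + (1 / ((φ n : ℝ) + 1)) • e')
      = (fun n => μs (φ n) • xs (φ n)) := by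
    funext n
    exact hμseq (φ n)
  rw [heq] at hlhs
  have hfinal : T xl = μl • xl := tendsto_nhds_unique hlhs hrhs
  refine ⟨xl, hxlK.1, ?_, μl, hμl.1, hfinal⟩
  intro h
  have := hxlK.2
  rw [h] at this
  simp at this
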